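/- arXiv:1608.03392 — 2 statements merged into one kernel-verified Lean document; each statement's English description precedes it below -/
import Mathlib

section
/- Let G be a finite simple graph on n ≥ 2 vertices that is not the complete graph K_n. Then n/2 ≤ dim^J_2(G) ≤ n − 1. Moreover, if dim^J_2(G) = n/2, then n is even and G is isomorphic to the complete multipartite graph K_{2,…,2} with n/2 parts of size 2 (the cocktail-party graph). -/
open scoped Classical RealInnerProductSpace

noncomputable section

/-- A two-distance representation of a simple graph `G` in `ℝ^d`
(`= EuclideanSpace ℝ (Fin d)`) with distances `a` and `b`, `0 < a ≤ b`: adjacent vertices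
are mapped to points at distance `a`, distinct non-adjacent vertices to points at
distance `b`. -/
def IsTwoDistRep {V : Type*} (G : SimpleGraph V) {d : ℕ}
    (f : V → EuclideanSpace ℝ (Fin d)) (a b : ℝ) : Prop :=
  0 < a ∧ a ≤ b ∧
    (∀ u v, G.Adj u v → dist (f u) (f v) = a) ∧
    (∀ u v, u ≠ v → ¬ G.Adj u v → dist (f u) (f v) = b)

/-- The Euclidean representation number `dim^E_2(G)`: the smallest `d` such that `G` has a
two-distance representation in `ℝ^d`. -/
def dimE2 {V : Type*} (G : SimpleGraph V) : ℕ :=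
  sInf {d | ∃ (f : V → EuclideanSpace ℝ (Fin d)) (a b : ℝ), IsTwoDistRep G f a b}

/-- The spherical representation number `dim^S_2(G)`: the smallest `d` such that `G` has a
two-distance representation in `ℝ^d` whose image lies on a sphere. -/
def dimS2 {V : Type*} (G : SimpleGraph V) : ℕ :=
  sInf {d | ∃ (f : V → EuclideanSpace ℝ (Fin d)) (a b : ℝ)
      (c : EuclideanSpace ℝ (Fin d)) (r : ℝ),
    IsTwoDistRep G f a b ∧ ∀ v, dist c (f v) = r}

/-- The J-spherical representation number `dim^J_2(G)`: the smallest `d` such that `G` has a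
two-distance representation in `ℝ^d` with distances `√2` and `b` (`√2 ≤ b`) whose image lies
on the unit sphere centered at the origin. -/
def dimJ2 {V : Type*} (G : SimpleGraph V) : ℕ :=
  sInf {d | ∃ (f : V → EuclideanSpace ℝ (Fin d)) (b : ℝ),
    IsTwoDistRep G f (Real.sqrt 2) b ∧ ∀ v, ‖f v‖ = 1}

/-- `β_*(G)`: the second distance of the (unique) J-spherical representation of `G` in
dimension `dimJ2 G`. -/
def betaStar {V : Type*} (G : SimpleGraph V) : ℝ :=
  sInf {b : ℝ | ∃ f : V → EuclideanSpace ℝ (Fin (dimJ2 G)),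
    IsTwoDistRep G f (Real.sqrt 2) b ∧ ∀ v, ‖f v‖ = 1}

/-- The Cayley–Menger matrix of a graph, with entries in `ℝ[X]`: the extra index `none`
gives the row and column of `1`s (with `0` in the corner), and for distinct vertices `u, v`
the entry is `1` if they are adjacent and `X` (the variable `t`) otherwise. -/
def cmMatrix {V : Type*} [Fintype V] (G : SimpleGraph V) :
    Matrix (Option V) (Option V) (Polynomial ℝ) := fun i j =>
  match i, j with
  | none, none => 0
  | none, some _ => 1
  | some _, none => 1
  | some u, some v => if u = v then 0 else if G.Adj u v then 1 else Polynomial.X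

/-- The Cayley–Menger polynomial `C_G(t)`. -/
def CG {V : Type*} [Fintype V] (G : SimpleGraph V) : Polynomial ℝ :=
  (cmMatrix G).det

/-- The matrix defining `M_G`. -/
def mMatrix {V : Type*} [Fintype V] (G : SimpleGraph V) :
    Matrix V V (Polynomial ℝ) := fun u v =>
  if u = v then 0 else if G.Adj u v then 1 else Polynomial.X

/-- The polynomial `M_G(t)`. -/
def MG {V : Type*} [Fintype V] (G : SimpleGraph V) : Polynomial ℝ :=
  (mMatrix G).det

/-- `C_G` has a root greater than `1` (i.e. `τ₁(G) < ∞`). -/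
def HasTau {V : Type*} [Fintype V] (G : SimpleGraph V) : Prop :=
  ∃ t : ℝ, 1 < t ∧ (CG G).eval t = 0

/-- `τ₁(G)`: the smallest root of `C_G` greater than `1` (junk value if none exists). -/
def tau1 {V : Type*} [Fintype V] (G : SimpleGraph V) : ℝ :=
  sInf {t : ℝ | 1 < t ∧ (CG G).eval t = 0}

/-- `μ(G)`: the multiplicity of `τ₁(G)` as a root of `C_G`, and `0` if `C_G` has no
root greater than `1`. -/
def muG {V : Type*} [Fintype V] (G : SimpleGraph V) : ℕ :=
  if HasTau G then (CG G).rootMultiplicity (tau1 G) else 0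

/-- `F_G = -M_G / (2 C_G)`, viewed as a rational function of `t`. -/
def FG {V : Type*} [Fintype V] (G : SimpleGraph V) : RatFunc ℝ :=
  RatFunc.mk (-(MG G)) (2 * CG G)

/-- The rational function `F_G` has no pole at `τ₁(G)`: the denominator of the reduced
fraction does not vanish there. -/
def NoPoleAtTau {V : Type*} [Fintype V] (G : SimpleGraph V) : Prop :=
  (FG G).denom.eval (tau1 G) ≠ 0

/-- The value `F_G(τ₁(G))` of the rational function `F_G` at `τ₁(G)`. -/
def FGtau {V : Type*} [Fintype V] (G : SimpleGraph V) : ℝ :=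
  (FG G).eval (RingHom.id ℝ) (tau1 G)

/-- The circumradius `R(G)` is finite: `τ₁(G) < ∞` and `F_G` has no pole at `τ₁(G)`.
(Then `R(G) = √(F_G(τ₁(G)))`.) -/
def RGfin {V : Type*} [Fintype V] (G : SimpleGraph V) : Prop :=
  HasTau G ∧ NoPoleAtTau G

/-- The value of `F_G` at a point `t` which is not a root of `C_G`. -/
def FGval {V : Type*} [Fintype V] (G : SimpleGraph V) (t : ℝ) : ℝ :=
  -((MG G).eval t) / (2 * (CG G).eval t)

/-- `dim^S_2(G, R₀)`: the smallest `d` such that `G` has a two-distance representation in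
`ℝ^d` with distances `1` and `b` whose image lies on a sphere of radius at most `R₀`. -/
def dimS2R {V : Type*} (G : SimpleGraph V) (R₀ : ℝ) : ℕ :=
  sInf {d | ∃ (f : V → EuclideanSpace ℝ (Fin d)) (b : ℝ)
      (c : EuclideanSpace ℝ (Fin d)) (r : ℝ),
    IsTwoDistRep G f 1 b ∧ r ≤ R₀ ∧ ∀ v, dist c (f v) = r}

/-- The join of two graphs: their disjoint union together with all edges between the parts. -/
def graphJoin {V₁ V₂ : Type} (G₁ : SimpleGraph V₁) (G₂ : SimpleGraph V₂) :
    SimpleGraph (V₁ ⊕ V₂) :=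
  SimpleGraph.fromRel fun x y =>
    (∃ a b, x = Sum.inl a ∧ y = Sum.inl b ∧ G₁.Adj a b) ∨
    (∃ a b, x = Sum.inr a ∧ y = Sum.inr b ∧ G₂.Adj a b) ∨
    (∃ a b, x = Sum.inl a ∧ y = Sum.inr b)

/-- The join of a family of graphs: two vertices are adjacent iff they lie in different
summands or are adjacent within their common summand. -/
def familyJoin {ι : Type*} {V : ι → Type*} (G : ∀ i, SimpleGraph (V i)) :
    SimpleGraph (Σ i, V i) :=
  SimpleGraph.fromRel fun x y =>
    x.1 ≠ y.1 ∨ ∃ h : x.1 = y.1, (G y.1).Adj (h ▸ x.2) y.2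

/-- A graph is join-indecomposable if it is not isomorphic to a join of two graphs,
each having at least one vertex. -/
def JoinIndecomposable {V : Type} (G : SimpleGraph V) : Prop :=
  ¬ ∃ (V₁ V₂ : Type) (G₁ : SimpleGraph V₁) (G₂ : SimpleGraph V₂),
      Nonempty V₁ ∧ Nonempty V₂ ∧ Nonempty (G ≃g graphJoin G₁ G₂)

/-- `S` is of Type I in the linear subspace `L`: all points have norm `1`,
`|S| = dim L + 1`, the affine hull of `S` has dimension `dim L`, and the origin lies in the
relative interior of the convex hull of `S`. -/
def TypeI {d : ℕ} (L : Submodule ℝ (EuclideanSpace ℝ (Fin d)))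
    (S : Finset (EuclideanSpace ℝ (Fin d))) : Prop :=
  (↑S : Set (EuclideanSpace ℝ (Fin d))) ⊆ (L : Set (EuclideanSpace ℝ (Fin d))) ∧
  (∀ p ∈ S, ‖p‖ = 1) ∧
  S.card = Module.finrank ℝ L + 1 ∧
  Module.finrank ℝ (affineSpan ℝ (↑S : Set (EuclideanSpace ℝ (Fin d)))).direction =
    Module.finrank ℝ L ∧
  (0 : EuclideanSpace ℝ (Fin d)) ∈
    intrinsicInterior ℝ (convexHull ℝ (↑S : Set (EuclideanSpace ℝ (Fin d))))

/-- `S` is of Type II in the linear subspace `L`: all points have norm `1`,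
`|S| = dim L`, the affine hull of `S` has dimension `dim L - 1`, and the origin does not lie
in the affine hull of `S`. -/
def TypeII {d : ℕ} (L : Submodule ℝ (EuclideanSpace ℝ (Fin d)))
    (S : Finset (EuclideanSpace ℝ (Fin d))) : Prop :=
  (↑S : Set (EuclideanSpace ℝ (Fin d))) ⊆ (L : Set (EuclideanSpace ℝ (Fin d))) ∧
  (∀ p ∈ S, ‖p‖ = 1) ∧
  S.card = Module.finrank ℝ L ∧
  Module.finrank ℝ (affineSpan ℝ (↑S : Set (EuclideanSpace ℝ (Fin d)))).direction =
    Module.finrank ℝ L - 1 ∧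
  (0 : EuclideanSpace ℝ (Fin d)) ∉ affineSpan ℝ (↑S : Set (EuclideanSpace ℝ (Fin d)))

/-- A J-spherical two-distance (JSTD) set with second distance `b`: a finite set on the unit
sphere centered at the origin whose pairwise distances take exactly the two values `√2` and
`b`, where `b > √2`. -/
def IsJSTD {d : ℕ} (S : Finset (EuclideanSpace ℝ (Fin d))) (b : ℝ) : Prop :=
  (∀ p ∈ S, ‖p‖ = 1) ∧ Real.sqrt 2 < b ∧
  (∀ p ∈ S, ∀ q ∈ S, p ≠ q → dist p q = Real.sqrt 2 ∨ dist p q = b) ∧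
  (∃ p ∈ S, ∃ q ∈ S, dist p q = Real.sqrt 2) ∧
  (∃ p ∈ S, ∃ q ∈ S, dist p q = b)


section Helpers

open Module Finset
open scoped Matrix

lemma twoDist_key : ∀ (d : ℕ) (E : Type) [NormedAddCommGroup E] [InnerProductSpace ℝ E]
    [FiniteDimensional ℝ E], finrank ℝ E = d →
    ∀ {ι : Type} (s : Finset ι) (x : ι → E),
    (∀ i ∈ s, ‖x i‖ = 1) → (∀ i ∈ s, ∀ j ∈ s, i ≠ j → ⟪x i, x j⟫ ≤ 0) →
    s.card ≤ 2 * d ∧ (s.card = 2 * d →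
      (∀ i ∈ s, ∃ j ∈ s, x j = -x i) ∧
      (∀ i ∈ s, ∀ j ∈ s, i ≠ j → x j ≠ -x i → ⟪x i, x j⟫ = 0)) := by
  intro d
  induction d with
  | zero =>
    intro E _ _ _ hE ι s x hnorm hinner
    have hsub : Subsingleton E := finrank_zero_iff.mp hE
    have hs : s = ∅ := by
      by_contra h
      obtain ⟨i, hi⟩ := Finset.nonempty_iff_ne_empty.mpr h
      have h1 := hnorm i hi
      have h0 : x i = 0 := Subsingleton.elim _ _
      rw [h0, norm_zero] at h1
      exact zero_ne_one h1
    subst hs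
    exact ⟨by simp, fun _ => ⟨by simp, by simp⟩⟩
  | succ d ih =>
    intro E _ _ _ hE ι s x hnorm hinner
    rcases s.eq_empty_or_nonempty with rfl | ⟨i₀, hi₀⟩
    · refine ⟨by simp, fun h => by simp at h⟩
    set u := x i₀ with hu_def
    have hu : ‖u‖ = 1 := hnorm i₀ hi₀
    have huu : ⟪u, u⟫ = 1 := by rw [real_inner_self_eq_norm_sq, hu]; norm_num
    have hune : u ≠ 0 := by
      intro h; rw [h, norm_zero] at hu; exact zero_ne_one hu
    haveI : Fact (finrank ℝ E = d + 1) := ⟨hE⟩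
    set F := (ℝ ∙ u)ᗮ with hF_def
    have hF : finrank ℝ F = d := Submodule.finrank_orthogonal_span_singleton hune
    have hbadone : ∀ j ∈ s, ∀ k ∈ s, x j = -u → x k = -u → j = k := by
      intro j hj k hk hxj hxk
      by_contra hne
      have h2 := hinner j hj k hk hne
      rw [hxj, hxk, inner_neg_neg, huu] at h2
      linarith
    set z : ι → E := fun j => x j - ⟪x j, u⟫ • u with hz_def
    have hzF : ∀ j, z j ∈ F := by
      intro j
      rw [hF_def, Submodule.mem_orthogonal_singleton_iff_inner_right]
      simp only [hz_def, inner_sub_right, real_inner_smul_right, huu]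
      rw [real_inner_comm u (x j)]; ring
    have hzinner : ∀ j k, ⟪z j, z k⟫ = ⟪x j, x k⟫ - ⟪x j, u⟫ * ⟪x k, u⟫ := by
      intro j k
      simp only [hz_def, inner_sub_left, inner_sub_right, real_inner_smul_left,
        real_inner_smul_right, huu, RCLike.star_def, conj_trivial]
      rw [real_inner_comm u (x k)]; ring
    have hznorm : ∀ j ∈ s, j ≠ i₀ → x j ≠ -u → z j ≠ 0 := by
      intro j hj hji hjne h0
      have hxj : x j = ⟪x j, u⟫ • u := sub_eq_zero.mp h0
      have ha : ⟪x j, u⟫ ≤ 0 := hinner j hj i₀ hi₀ hji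
      have hn1 : (1 : ℝ) = |⟪x j, u⟫| := by
        have h2 := hnorm j hj
        rw [hxj, norm_smul, hu, mul_one] at h2
        exact h2.symm
      rw [abs_of_nonpos ha] at hn1
      have h3 : ⟪x j, u⟫ = -1 := by linarith
      rw [h3, neg_one_smul] at hxj
      exact hjne hxj
    set t' : Finset ι := (s.erase i₀).filter (fun j => ¬ (x j = -u)) with ht'_def
    have ht'mem : ∀ j ∈ t', j ∈ s ∧ j ≠ i₀ ∧ x j ≠ -u := by
      intro j hj
      rw [ht'_def, Finset.mem_filter, Finset.mem_erase] at hj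
      exact ⟨hj.1.2, hj.1.1, hj.2⟩
    set y : ι → F := fun j => (‖z j‖)⁻¹ • (⟨z j, hzF j⟩ : F) with hy_def
    have hynorm : ∀ j ∈ t', ‖y j‖ = 1 := by
      intro j hj
      obtain ⟨hj1, hj2, hj3⟩ := ht'mem j hj
      have hz0 := hznorm j hj1 hj2 hj3
      rw [hy_def]
      simp only [norm_smul, norm_inv, norm_norm]
      have h4 : ‖(⟨z j, hzF j⟩ : F)‖ = ‖z j‖ := rfl
      rw [h4, inv_mul_cancel₀ (norm_ne_zero_iff.mpr hz0)]
    have hyinner : ∀ j ∈ t', ∀ k ∈ t', j ≠ k → ⟪y j, y k⟫ ≤ 0 := by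
      intro j hj k hk hjk
      obtain ⟨hj1, hj2, hj3⟩ := ht'mem j hj
      obtain ⟨hk1, hk2, hk3⟩ := ht'mem k hk
      have hzjk : ⟪z j, z k⟫ ≤ 0 := by
        rw [hzinner j k]
        have h1 := hinner j hj1 k hk1 hjk
        have h2 := hinner j hj1 i₀ hi₀ hj2
        have h3 := hinner k hk1 i₀ hi₀ hk2
        nlinarith
      have hcoe : ⟪y j, y k⟫ = (‖z j‖)⁻¹ * ((‖z k‖)⁻¹ * ⟪z j, z k⟫) := by
        rw [hy_def]
        simp only [Submodule.coe_inner, Submodule.coe_smul, real_inner_smul_left,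
          real_inner_smul_right]
        ring
      rw [hcoe]
      exact mul_nonpos_of_nonneg_of_nonpos (inv_nonneg.mpr (norm_nonneg _))
        (mul_nonpos_of_nonneg_of_nonpos (inv_nonneg.mpr (norm_nonneg _)) hzjk)
    obtain ⟨iht', _⟩ := ih F hF t' y hynorm hyinner
    have herase : (s.erase i₀).card + 1 = s.card := Finset.card_erase_add_one hi₀
    have hsplit : ((s.erase i₀).filter (fun j => x j = -u)).card + t'.card
        = (s.erase i₀).card := by
      rw [ht'_def, Finset.card_filter_add_card_filter_not]
    have hbadcard : ((s.erase i₀).filter (fun j => x j = -u)).card ≤ 1 := by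
      refine Finset.card_le_one.mpr ?_
      intro a ha b hb
      rw [Finset.mem_filter, Finset.mem_erase] at ha hb
      exact hbadone a ha.1.2 b hb.1.2 ha.2 hb.2
    refine ⟨by omega, ?_⟩
    intro hcard
    -- equality case
    have hbad1 : ((s.erase i₀).filter (fun j => x j = -u)).card = 1 := by omega
    obtain ⟨j₀, hj₀⟩ := Finset.card_pos.mp (by omega :
      0 < ((s.erase i₀).filter (fun j => x j = -u)).card)
    rw [Finset.mem_filter, Finset.mem_erase] at hj₀
    obtain ⟨⟨hj₀i₀, hj₀s⟩, hxj₀⟩ := hj₀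
    have horto : ∀ j ∈ s, j ≠ i₀ → j ≠ j₀ → ⟪x j, u⟫ = 0 := by
      intro j hj hji hjj
      refine le_antisymm (hinner j hj i₀ hi₀ hji) ?_
      have h2 := hinner j hj j₀ hj₀s hjj
      rw [hxj₀, inner_neg_right] at h2
      linarith
    set t'' : Finset ι := (s.erase i₀).erase j₀ with ht''_def
    have ht''mem : ∀ j, j ∈ t'' ↔ j ∈ s ∧ j ≠ i₀ ∧ j ≠ j₀ := by
      intro j
      rw [ht''_def, Finset.mem_erase, Finset.mem_erase]
      tauto
    have ht''card : t''.card = 2 * d := by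
      have h5 : j₀ ∈ s.erase i₀ := Finset.mem_erase.mpr ⟨hj₀i₀, hj₀s⟩
      have h6 := Finset.card_erase_add_one h5
      rw [ht''_def]
      omega
    have hxF : ∀ j ∈ t'', x j ∈ F := by
      intro j hj
      rw [ht''mem] at hj
      rw [hF_def, Submodule.mem_orthogonal_singleton_iff_inner_right,
        real_inner_comm]
      exact horto j hj.1 hj.2.1 hj.2.2
    set x' : ι → F := fun j => if h : x j ∈ F then (⟨x j, h⟩ : F) else 0 with hx'_def
    have hx'co : ∀ j ∈ t'', (x' j : E) = x j := by
      intro j hj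
      rw [hx'_def]
      simp only [dif_pos (hxF j hj)]
    have hx'inner : ∀ j ∈ t'', ∀ k ∈ t'', ⟪x' j, x' k⟫ = ⟪x j, x k⟫ := by
      intro j hj k hk
      rw [Submodule.coe_inner, hx'co j hj, hx'co k hk]
    obtain ⟨_, ihE⟩ := ih F hF t'' x'
      (fun j hj => by
        rw [← hnorm j ((ht''mem j).mp hj).1]
        rw [← hx'co j hj]; rfl)
      (fun j hj k hk hjk => by
        rw [hx'inner j hj k hk]
        exact hinner j ((ht''mem j).mp hj).1 k ((ht''mem k).mp hk).1 hjk)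
    obtain ⟨H1, H2⟩ := ihE ht''card
    have hnegiff : ∀ j ∈ t'', ∀ k ∈ t'', (x' k = -x' j ↔ x k = -x j) := by
      intro j hj k hk
      rw [Subtype.ext_iff]
      have h6 : ((-x' j : F) : E) = -(x' j : E) := rfl
      rw [h6, hx'co j hj, hx'co k hk]
    constructor
    · -- C1
      intro i hi
      by_cases hii : i = i₀
      · exact ⟨j₀, hj₀s, by rw [hii]; exact hxj₀⟩
      by_cases hij : i = j₀
      · refine ⟨i₀, hi₀, ?_⟩
        rw [hij, hxj₀, neg_neg]
      have hit : i ∈ t'' := (ht''mem i).mpr ⟨hi, hii, hij⟩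
      obtain ⟨j, hj, hxx⟩ := H1 i hit
      exact ⟨j, ((ht''mem j).mp hj).1, (hnegiff i hit j hj).mp hxx⟩
    · -- C2
      intro i hi j hj hij hne
      by_cases hii : i = i₀
      · subst hii
        by_cases hjj : j = j₀
        · exact absurd (by rw [hjj]; exact hxj₀) hne
        · rw [real_inner_comm]
          exact horto j hj (Ne.symm hij) hjj
      by_cases hij₀ : i = j₀
      · subst hij₀
        by_cases hji : j = i₀
        · exfalso
          apply hne
          rw [hji, hxj₀, neg_neg]
        · rw [hxj₀, inner_neg_left, neg_eq_zero, real_inner_comm]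
          exact horto j hj hji (Ne.symm hij)
      have hit : i ∈ t'' := (ht''mem i).mpr ⟨hi, hii, hij₀⟩
      by_cases hji : j = i₀
      · rw [hji]
        exact horto i hi hii hij₀
      by_cases hjj₀ : j = j₀
      · rw [hjj₀, hxj₀, inner_neg_right, neg_eq_zero]
        exact horto i hi hii hij₀
      have hjt : j ∈ t'' := (ht''mem j).mpr ⟨hj, hji, hjj₀⟩
      rw [← hx'inner i hit j hjt]
      refine H2 i hit j hjt hij ?_
      intro h7
      exact hne ((hnegiff i hit j hjt).mp h7)

lemma rep_structure {n d : ℕ} (hn : 2 ≤ n) (G : SimpleGraph (Fin n))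
    {f : Fin n → EuclideanSpace ℝ (Fin d)} {b : ℝ}
    (hrep : IsTwoDistRep G f (Real.sqrt 2) b) (hnorm : ∀ v, ‖f v‖ = 1) :
    n ≤ 2 * d ∧ (n = 2 * d → ∃ p : Fin n → Fin n, (∀ i, p (p i) = i) ∧ (∀ i, p i ≠ i) ∧
      ∀ u v, G.Adj u v ↔ u ≠ v ∧ v ≠ p u) := by
  obtain ⟨ha, hab, hadj, hnadj⟩ := hrep
  have hb0 : 0 < b := lt_of_lt_of_le ha hab
  have hfne : ∀ u v : Fin n, u ≠ v → f u ≠ f v := by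
    intro u v huv heq
    have hd : dist (f u) (f v) = 0 := by rw [heq, dist_self]
    by_cases h : G.Adj u v
    · rw [hadj u v h] at hd; linarith
    · rw [hnadj u v huv h] at hd; linarith
  have hinner : ∀ u v : Fin n, u ≠ v → ⟪f u, f v⟫ = 1 - dist (f u) (f v) ^ 2 / 2 := by
    intro u v huv
    have h1 : dist (f u) (f v) ^ 2 = ‖f u - f v‖ ^ 2 := by rw [dist_eq_norm]
    rw [norm_sub_sq_real, hnorm u, hnorm v] at h1
    linarith
  have hiadj : ∀ u v : Fin n, G.Adj u v → ⟪f u, f v⟫ = 0 := by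
    intro u v h
    rw [hinner u v (G.ne_of_adj h), hadj u v h, Real.sq_sqrt (by norm_num : (2:ℝ) ≥ 0)]
    norm_num
  have hb2 : 2 ≤ b ^ 2 := by
    have := Real.sq_sqrt (by norm_num : (2:ℝ) ≥ 0)
    nlinarith [Real.sqrt_nonneg 2]
  have hinadj : ∀ u v : Fin n, u ≠ v → ¬ G.Adj u v → ⟪f u, f v⟫ = 1 - b ^ 2 / 2 := by
    intro u v huv h
    rw [hinner u v huv, hnadj u v huv h]
  have hile : ∀ u ∈ Finset.univ, ∀ v ∈ Finset.univ, u ≠ v → ⟪f u, f v⟫ ≤ 0 := by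
    intro u _ v _ huv
    by_cases h : G.Adj u v
    · rw [hiadj u v h]
    · rw [hinadj u v huv h]; linarith
  have hkey := twoDist_key d (EuclideanSpace ℝ (Fin d)) finrank_euclideanSpace_fin
    Finset.univ f (fun i _ => hnorm i) hile
  rw [Finset.card_univ, Fintype.card_fin] at hkey
  refine ⟨hkey.1, ?_⟩
  intro hcard
  obtain ⟨H1, H2⟩ := hkey.2 hcard
  have hex : ∀ i : Fin n, ∃ j : Fin n, f j = -f i := by
    intro i
    obtain ⟨j, _, hj⟩ := H1 i (Finset.mem_univ i)
    exact ⟨j, hj⟩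
  set p : Fin n → Fin n := fun i => Classical.choose (hex i) with hp_def
  have hp : ∀ i, f (p i) = -f i := fun i => Classical.choose_spec (hex i)
  have hf0 : ∀ i, f i ≠ 0 := by
    intro i h
    have := hnorm i
    rw [h, norm_zero] at this
    exact zero_ne_one this
  have hpne : ∀ i, p i ≠ i := by
    intro i h
    have h2 := hp i
    rw [h] at h2
    have h2' : f i + f i = 0 := by nth_rewrite 2 [h2]; simp
    have h3 : (2 : ℝ) • f i = 0 := by rw [two_smul]; exact h2'
    rcases smul_eq_zero.mp h3 with h4 | h4
    · norm_num at h4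
    · exact hf0 i h4
  have hfinj : ∀ u v : Fin n, f u = f v → u = v := by
    intro u v h
    by_contra hne
    exact hfne u v hne h
  have hpp : ∀ i, p (p i) = i := by
    intro i
    apply hfinj
    rw [hp (p i), hp i, neg_neg]
  have hnadjp : ∀ i, ¬ G.Adj i (p i) := by
    intro i h
    have h2 := hiadj i (p i) h
    rw [hp i, inner_neg_right, real_inner_self_eq_norm_sq, hnorm i] at h2
    norm_num at h2
  have hbval : 1 - b ^ 2 / 2 = -1 := by
    have i0 : Fin n := ⟨0, by omega⟩
    have h2 := hinadj i0 (p i0) (Ne.symm (hpne i0)) (hnadjp i0)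
    rw [hp i0, inner_neg_right, real_inner_self_eq_norm_sq, hnorm i0] at h2
    linarith
  refine ⟨p, hpp, hpne, ?_⟩
  intro u v
  constructor
  · intro h
    refine ⟨G.ne_of_adj h, ?_⟩
    intro hv
    rw [hv] at h
    exact hnadjp u h
  · rintro ⟨huv, hvp⟩
    by_contra h
    have h2 := hinadj u v huv h
    have h3 : f v ≠ -f u := by
      intro h4
      apply hvp
      apply hfinj
      rw [hp u, h4]
    have h4 := H2 u (Finset.mem_univ u) v (Finset.mem_univ v) huv h3
    rw [h2, hbval] at h4
    norm_num at h4

lemma cocktail {n d : ℕ} (hnd : n = 2 * d) (G : SimpleGraph (Fin n))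
    (p : Fin n → Fin n) (hpp : ∀ i, p (p i) = i) (hpne : ∀ i, p i ≠ i)
    (hadj : ∀ u v, G.Adj u v ↔ u ≠ v ∧ v ≠ p u) :
    Nonempty (G ≃g SimpleGraph.completeMultipartiteGraph fun _ : Fin d => Fin 2) := by
  have hpinj : Function.Injective p := by
    intro a b h
    have := congrArg p h
    rwa [hpp, hpp] at this
  set R : Finset (Fin n) := Finset.univ.filter (fun i => i < p i) with hR_def
  have hcardR : R.card = d := by
    have h1 : R.card = (Finset.univ.filter (fun i : Fin n => p i < i)).card := by
      apply Finset.card_bij (fun i _ => p i)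
      · intro a ha
        rw [hR_def, Finset.mem_filter] at ha
        rw [Finset.mem_filter]
        exact ⟨Finset.mem_univ _, by rw [hpp]; exact ha.2⟩
      · intro a _ b _ h
        exact hpinj h
      · intro b hb
        rw [Finset.mem_filter] at hb
        refine ⟨p b, ?_, hpp b⟩
        rw [hR_def, Finset.mem_filter, hpp]
        exact ⟨Finset.mem_univ _, hb.2⟩
    have h2 : R.card + (Finset.univ.filter (fun i : Fin n => ¬ (i < p i))).card
        = (Finset.univ : Finset (Fin n)).card := by
      rw [hR_def]
      exact Finset.card_filter_add_card_filter_not _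
    have h3 : (Finset.univ.filter (fun i : Fin n => ¬ (i < p i)))
        = (Finset.univ.filter (fun i : Fin n => p i < i)) := by
      apply Finset.filter_congr
      intro i _
      simp only [not_lt, eq_iff_iff]
      constructor
      · intro h
        exact lt_of_le_of_ne h (hpne i)
      · intro h
        exact le_of_lt h
    rw [h3, ← h1] at h2
    rw [Finset.card_univ, Fintype.card_fin] at h2
    omega
  set e0 := R.orderIsoOfFin hcardR with he0_def
  have he0R : ∀ i : Fin d, ((e0 i : Fin n) < p (e0 i)) := by
    intro i
    have h7 := (e0 i).2
    simp only [hR_def, Finset.mem_filter] at h7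
    exact h7.2
  have he0inj : ∀ i j : Fin d, (e0 i : Fin n) = e0 j → i = j := by
    intro i j h
    exact e0.injective (Subtype.ext h)
  have key : ∀ (i j : Fin d), (e0 i : Fin n) = p (e0 j) → False := by
    intro i j hij
    have h1 : (e0 j : Fin n) < p (e0 j) := he0R j
    have h2 : (e0 i : Fin n) < p (e0 i) := he0R i
    rw [hij, hpp] at h2
    exact absurd (h1.trans h2) (lt_irrefl _)
  set g : (Σ _ : Fin d, Fin 2) → Fin n := fun q => if q.2 = 0 then (e0 q.1 : Fin n)
    else p (e0 q.1) with hg_def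
  have hgval0 : ∀ (i : Fin d), g ⟨i, 0⟩ = (e0 i : Fin n) := by intro i; simp [hg_def]
  have hgval1 : ∀ (i : Fin d), g ⟨i, 1⟩ = p (e0 i) := by
    intro i
    simp only [hg_def]
    norm_num
  have hfin2 : ∀ a : Fin 2, a = 0 ∨ a = 1 := by decide
  have hginj : Function.Injective g := by
    rintro ⟨i, a⟩ ⟨j, b⟩ h
    rcases hfin2 a with rfl | rfl <;> rcases hfin2 b with rfl | rfl
    · rw [hgval0, hgval0] at h
      rw [he0inj i j h]
    · rw [hgval0, hgval1] at h
      exact (key i j h).elim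
    · rw [hgval1, hgval0] at h
      exact (key j i h.symm).elim
    · rw [hgval1, hgval1] at h
      rw [he0inj i j (hpinj h)]
  have hgbij : Function.Bijective g := by
    rw [Fintype.bijective_iff_injective_and_card]
    refine ⟨hginj, ?_⟩
    rw [Fintype.card_sigma, Fintype.card_fin]
    simp only [Fintype.card_fin, Finset.sum_const, Finset.card_univ, smul_eq_mul]
    omega
  have hswap : ∀ (i : Fin d) (a : Fin 2), ∃ a' : Fin 2, a' ≠ a ∧ p (g ⟨i, a⟩) = g ⟨i, a'⟩ := by
    intro i a
    rcases hfin2 a with rfl | rfl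
    · exact ⟨1, by decide, by rw [hgval0, hgval1]⟩
    · exact ⟨0, by decide, by rw [hgval0, hgval1, hpp]⟩
  set e := Equiv.ofBijective g hgbij with he_def
  refine ⟨?_⟩
  have hiso : (SimpleGraph.completeMultipartiteGraph fun _ : Fin d => Fin 2) ≃g G := by
    refine ⟨e, ?_⟩
    rintro ⟨i, a⟩ ⟨j, b⟩
    show G.Adj (g ⟨i, a⟩) (g ⟨j, b⟩) ↔ _
    rw [hadj]
    simp only [SimpleGraph.comap_adj, SimpleGraph.top_adj]
    constructor
    · rintro ⟨h1, h2⟩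
      show i ≠ j
      intro hij
      subst hij
      by_cases hab : a = b
      · subst hab; exact h1 rfl
      · obtain ⟨a', ha', hpa⟩ := hswap i a
        apply h2
        have hba : b = a' := by omega
        rw [hpa, hba]
    · intro hij
      have hij' : i ≠ j := hij
      constructor
      · intro h
        have := hginj h
        apply hij'
        exact congrArg Sigma.fst this
      · intro h
        obtain ⟨a', ha', hpa⟩ := hswap i a
        rw [hpa] at h
        have := hginj h
        apply hij'
        exact (congrArg Sigma.fst this).symm
  exact hiso.symm

lemma exists_rep {n : ℕ} (hn : 2 ≤ n) (G : SimpleGraph (Fin n)) (hG : G ≠ ⊤) :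
    ∃ (f : Fin n → EuclideanSpace ℝ (Fin (n - 1))) (b : ℝ),
      IsTwoDistRep G f (Real.sqrt 2) b ∧ ∀ v, ‖f v‖ = 1 := by
  haveI : NeZero n := ⟨by omega⟩
  obtain ⟨u₀, v₀, huv₀, hne₀⟩ : ∃ u v : Fin n, u ≠ v ∧ ¬ G.Adj u v := by
    by_contra h
    push_neg at h
    apply hG
    ext u v
    simp only [SimpleGraph.top_adj]
    exact ⟨fun h' => G.ne_of_adj h', fun h' => h u v h'⟩
  set A : Matrix (Fin n) (Fin n) ℝ :=
    Matrix.of (fun i j => if i ≠ j ∧ ¬ G.Adj i j then (1:ℝ) else 0) with hA_def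
  have hA : A.IsHermitian := by
    unfold Matrix.IsHermitian
    ext i j
    simp only [Matrix.conjTranspose_apply, hA_def, Matrix.of_apply, star_trivial]
    refine if_congr ?_ rfl rfl
    constructor
    · rintro ⟨h1, h2⟩; exact ⟨Ne.symm h1, fun h' => h2 (G.adj_symm h')⟩
    · rintro ⟨h1, h2⟩; exact ⟨Ne.symm h1, fun h' => h2 (G.adj_symm h')⟩
  set lam : ℝ := Finset.univ.sup' Finset.univ_nonempty hA.eigenvalues with hlam_def
  have hle : ∀ i, hA.eigenvalues i ≤ lam := fun i => Finset.le_sup' _ (Finset.mem_univ i)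
  set U : Matrix (Fin n) (Fin n) ℝ := (hA.eigenvectorUnitary : Matrix (Fin n) (Fin n) ℝ)
    with hU_def
  have hU : U * star U = 1 := Matrix.mem_unitaryGroup_iff.mp hA.eigenvectorUnitary.2
  have hspec : A = U * Matrix.diagonal hA.eigenvalues * star U := by
    simpa only [RCLike.ofReal_real_eq_id, Function.id_comp, Unitary.conjStarAlgAut_apply] using hA.spectral_theorem
  have conj_eq : ∀ a c : ℝ, a • (1 : Matrix (Fin n) (Fin n) ℝ) + c • A
      = U * Matrix.diagonal (fun i => a + c * hA.eigenvalues i) * star U := by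
    intro a c
    have h1 : Matrix.diagonal (fun i => a + c * hA.eigenvalues i)
        = a • (1 : Matrix (Fin n) (Fin n) ℝ) + c • Matrix.diagonal hA.eigenvalues := by
      ext i j
      by_cases h : i = j
      · subst h
        simp [Matrix.diagonal_apply_eq, Matrix.one_apply_eq]
      · simp [Matrix.diagonal_apply_ne _ h, Matrix.one_apply_ne h]
    rw [h1, Matrix.mul_add, Matrix.add_mul]
    congr 1
    · rw [mul_smul_comm, smul_mul_assoc, Matrix.mul_one, hU]
    · rw [mul_smul_comm, smul_mul_assoc, ← hspec]
  have haux : ∀ g : Fin n → ℝ, (∀ i, 0 ≤ g i)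
      → (U * Matrix.diagonal g * star U).PosSemidef := by
    intro g hg
    have h1 : (Matrix.diagonal g).PosSemidef := Matrix.PosSemidef.diagonal hg
    have h2 := h1.mul_mul_conjTranspose_same U
    rwa [← Matrix.star_eq_conjTranspose] at h2
  have hquad : ∀ (N : Matrix (Fin n) (Fin n) ℝ), N.PosSemidef →
      0 ≤ N u₀ u₀ + N u₀ v₀ + N v₀ u₀ + N v₀ v₀ := by
    intro N hN
    have h1 := hN.dotProduct_mulVec_nonneg (Pi.single u₀ 1 + Pi.single v₀ 1)
    have hstar : star (Pi.single u₀ 1 + Pi.single v₀ 1 : Fin n → ℝ)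
        = Pi.single u₀ 1 + Pi.single v₀ 1 := by
      funext k
      simp [Pi.star_apply]
    rw [hstar, Matrix.mulVec_add, Matrix.mulVec_single, Matrix.mulVec_single] at h1
    simp only [dotProduct_add, add_dotProduct, single_dotProduct,
      one_mul, mul_one] at h1
    refine h1.trans_eq ?_
    simp only [Pi.add_apply, Pi.smul_apply, Matrix.col_apply, MulOpposite.smul_eq_mul_unop, MulOpposite.unop_op, mul_one]
    ring
  have hA00 : ∀ i, A i i = 0 := by
    intro i
    simp [hA_def]
  have hAuv : A u₀ v₀ = 1 := by
    simp only [hA_def, Matrix.of_apply]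
    rw [if_pos ⟨huv₀, hne₀⟩]
  have hAvu : A v₀ u₀ = 1 := by
    simp only [hA_def, Matrix.of_apply]
    rw [if_pos ⟨Ne.symm huv₀, fun h => hne₀ (G.adj_symm h)⟩]
  have hlam1 : 1 ≤ lam := by
    have hpsdN : (lam • (1 : Matrix (Fin n) (Fin n) ℝ) + (-1 : ℝ) • A).PosSemidef := by
      rw [conj_eq]
      apply haux
      intro i
      have := hle i
      linarith
    have h1 := hquad _ hpsdN
    simp only [Matrix.add_apply, Matrix.smul_apply, Matrix.one_apply_eq,
      Matrix.one_apply_ne huv₀, Matrix.one_apply_ne (Ne.symm huv₀), hA00, hAuv, hAvu,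
      smul_eq_mul] at h1
    linarith
  have hlam0 : 0 < lam := by linarith
  set M : Matrix (Fin n) (Fin n) ℝ :=
    (1 : Matrix (Fin n) (Fin n) ℝ) + (-lam⁻¹) • A with hM_def
  have hMpsd : M.PosSemidef := by
    rw [hM_def]
    have h0 : (1 : Matrix (Fin n) (Fin n) ℝ) + (-lam⁻¹) • A
        = (1:ℝ) • (1 : Matrix (Fin n) (Fin n) ℝ) + (-lam⁻¹) • A := by rw [one_smul]
    rw [h0, conj_eq]
    apply haux
    intro i
    have h7 : lam⁻¹ * hA.eigenvalues i ≤ lam⁻¹ * lam :=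
      mul_le_mul_of_nonneg_left (hle i) (le_of_lt (inv_pos.mpr hlam0))
    rw [inv_mul_cancel₀ (ne_of_gt hlam0)] at h7
    linarith
  obtain ⟨istar, _, heig⟩ := Finset.exists_mem_eq_sup' Finset.univ_nonempty hA.eigenvalues
  rw [← hlam_def] at heig
  set v : Fin n → ℝ := ⇑(hA.eigenvectorBasis istar) with hv_def
  have hv0 : v ≠ 0 := by
    intro h
    have hb := hA.eigenvectorBasis.orthonormal.1 istar
    have hz : hA.eigenvectorBasis istar = 0 := by
      ext k
      exact congrFun h k
    rw [hz, norm_zero] at hb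
    exact zero_ne_one hb
  have hMv : M *ᵥ v = 0 := by
    rw [hM_def, Matrix.add_mulVec, Matrix.one_mulVec, Matrix.smul_mulVec]
    rw [hv_def, hA.mulVec_eigenvectorBasis, ← heig]
    rw [smul_smul, neg_mul, inv_mul_cancel₀ (ne_of_gt hlam0)]
    simp
  have hdet : M.det = 0 := Matrix.exists_mulVec_eq_zero_iff.mp ⟨v, hv0, hMv⟩
  obtain ⟨B, hB⟩ : ∃ B : Matrix (Fin n) (Fin n) ℝ, M = Bᴴ * B := by
    open scoped MatrixOrder in
    obtain ⟨B, hB⟩ := CStarAlgebra.nonneg_iff_eq_star_mul_self.mp hMpsd.nonneg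
    exact ⟨B, by rw [hB, Matrix.star_eq_conjTranspose]⟩
  set y : Fin n → EuclideanSpace ℝ (Fin n) := fun i => WithLp.toLp 2 (fun k => B k i) with hy_def
  have hyinner : ∀ i j, ⟪y i, y j⟫ = M i j := by
    intro i j
    rw [real_inner_comm (y j) (y i)]
    rw [PiLp.inner_apply]
    simp only [RCLike.inner_apply, conj_trivial, hy_def]
    rw [hB]
    simp only [Matrix.mul_apply, Matrix.conjTranspose_apply, star_trivial]
  -- linear dependence
  have hBv : B *ᵥ v = 0 := by
    have h9 : v ⬝ᵥ (M *ᵥ v) = 0 := by rw [hMv, dotProduct_zero]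
    have h10 : (B *ᵥ v) ⬝ᵥ (B *ᵥ v) = 0 := by
      have e2 : v ᵥ* Bᴴ = B *ᵥ v := by
        rw [Matrix.vecMul_conjTranspose]
        have hsv : star v = v := by funext k; exact star_trivial _
        rw [hsv]
        funext k; exact star_trivial _
      calc (B *ᵥ v) ⬝ᵥ (B *ᵥ v) = (v ᵥ* Bᴴ) ⬝ᵥ (B *ᵥ v) := by rw [e2]
        _ = v ⬝ᵥ (Bᴴ *ᵥ (B *ᵥ v)) := (Matrix.dotProduct_mulVec _ _ _).symm
        _ = v ⬝ᵥ (M *ᵥ v) := by rw [Matrix.mulVec_mulVec, ← hB]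
        _ = 0 := h9
    rwa [dotProduct_self_eq_zero] at h10
  have hdep : ¬ LinearIndependent ℝ y := by
    intro hind
    have h11 : ∑ k, v k • y k = 0 := by
      ext j
      have h12 : (∑ k, v k • y k) j = ∑ k, v k * B j k := by
        rw [WithLp.ofLp_sum, Finset.sum_apply]
        rfl
      have h13 : (B *ᵥ v) j = ∑ k, B j k * v k := rfl
      have h14 := congrFun hBv j
      rw [h13] at h14
      simp only [Pi.zero_apply] at h14
      show (∑ k, v k • y k) j = (0 : EuclideanSpace ℝ (Fin n)) j
      rw [h12, show (0 : EuclideanSpace ℝ (Fin n)) j = 0 from rfl, ← h14]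
      exact Finset.sum_congr rfl (fun k _ => mul_comm _ _)
    obtain ⟨k₀, hk₀⟩ := Function.ne_iff.mp hv0
    exact hk₀ (Fintype.linearIndependent_iff.mp hind v h11 k₀)
  set S := Submodule.span ℝ (Set.range y) with hS_def
  set r := finrank ℝ S with hr_def
  have hfinrank : (Set.range y).finrank ℝ = r := rfl
  have hrn : r ≤ n := by
    have h1 := finrank_range_le_card (R := ℝ) y
    rw [Fintype.card_fin, hfinrank] at h1
    exact h1
  have hrne : r ≠ n := by
    intro h
    apply hdep
    rw [linearIndependent_iff_card_eq_finrank_span, Fintype.card_fin, hfinrank]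
    exact h.symm
  have hrn1 : r ≤ n - 1 := by omega
  set ob := stdOrthonormalBasis ℝ S with hob_def
  have hyS : ∀ i, y i ∈ S := fun i => Submodule.subset_span ⟨i, rfl⟩
  set g0 : Fin n → EuclideanSpace ℝ (Fin r) := fun i => ob.repr ⟨y i, hyS i⟩ with hg0_def
  have hg0inner : ∀ i j, ⟪g0 i, g0 j⟫ = M i j := by
    intro i j
    rw [hg0_def]
    rw [LinearIsometryEquiv.inner_map_map]
    rw [Submodule.coe_inner]
    exact hyinner i j
  set f : Fin n → EuclideanSpace ℝ (Fin (n - 1)) := fun i =>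
    WithLp.toLp 2 (fun k : Fin (n - 1) => if h : (k : ℕ) < r then g0 i ⟨k, h⟩ else 0) with hf_def
  have hfinner : ∀ i j, ⟪f i, f j⟫ = M i j := by
    intro i j
    rw [← hg0inner i j]
    rw [real_inner_comm (f j) (f i), real_inner_comm (g0 j) (g0 i)]
    rw [PiLp.inner_apply, PiLp.inner_apply]
    simp only [RCLike.inner_apply, conj_trivial]
    set c : ℕ → ℝ := fun m => if h : m < r then g0 i ⟨m, h⟩ * g0 j ⟨m, h⟩ else 0 with hc_def
    have step1 : ∑ k : Fin (n - 1), f i k * f j k = ∑ m ∈ Finset.range (n - 1), c m := by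
      rw [← Fin.sum_univ_eq_sum_range]
      apply Finset.sum_congr rfl
      intro k _
      rw [hf_def, hc_def]
      by_cases h : (k : ℕ) < r
      · simp only [dif_pos h]
      · simp only [dif_neg h, zero_mul]
    have step2 : ∑ m ∈ Finset.range (n - 1), c m = ∑ m ∈ Finset.range r, c m := by
      symm
      apply Finset.sum_subset (Finset.range_subset_range.mpr hrn1)
      intro m _ hm
      rw [Finset.mem_range, not_lt] at hm
      rw [hc_def]
      exact dif_neg (by omega)
    have step3 : ∑ m ∈ Finset.range r, c m = ∑ k : Fin r, g0 i k * g0 j k := by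
      rw [← Fin.sum_univ_eq_sum_range]
      apply Finset.sum_congr rfl
      intro k _
      rw [hc_def]
      simp only [dif_pos k.2, Fin.eta]
    rw [step1, step2, step3]
  have hM00 : ∀ i, M i i = 1 := by
    intro i
    rw [hM_def]
    simp only [Matrix.add_apply, Matrix.smul_apply, Matrix.one_apply_eq, hA00,
      smul_eq_mul, mul_zero, add_zero]
  have hMadj : ∀ u v : Fin n, G.Adj u v → M u v = 0 := by
    intro u v h
    rw [hM_def]
    simp only [Matrix.add_apply, Matrix.smul_apply, smul_eq_mul,
      Matrix.one_apply_ne (G.ne_of_adj h)]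
    have hAz : A u v = 0 := by
      simp only [hA_def, Matrix.of_apply]
      rw [if_neg]
      tauto
    rw [hAz]
    ring
  have hMnadj : ∀ u v : Fin n, u ≠ v → ¬ G.Adj u v → M u v = -lam⁻¹ := by
    intro u v h1 h2
    rw [hM_def]
    simp only [Matrix.add_apply, Matrix.smul_apply, smul_eq_mul, Matrix.one_apply_ne h1]
    have hA1 : A u v = 1 := by
      simp only [hA_def, Matrix.of_apply]
      rw [if_pos ⟨h1, h2⟩]
    rw [hA1]
    ring
  have hnormf : ∀ i, ‖f i‖ = 1 := by
    intro i
    have h1 : ⟪f i, f i⟫ = 1 := by rw [hfinner, hM00]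
    rw [real_inner_self_eq_norm_mul_norm] at h1
    rcases mul_self_eq_one_iff.mp h1 with h | h
    · exact h
    · have := norm_nonneg (f i)
      linarith
  have hdist : ∀ i j, dist (f i) (f j) = Real.sqrt (2 - 2 * M i j) := by
    intro i j
    have h1 : ‖f i - f j‖ ^ 2 = 2 - 2 * M i j := by
      rw [norm_sub_sq_real, hnormf, hnormf, hfinner]
      ring
    rw [dist_eq_norm, ← Real.sqrt_sq (norm_nonneg (f i - f j)), h1]
  have hlaminv : 0 < lam⁻¹ := inv_pos.mpr hlam0
  refine ⟨f, Real.sqrt (2 + 2 * lam⁻¹), ⟨Real.sqrt_pos.mpr (by norm_num), ?_, ?_, ?_⟩,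
    hnormf⟩
  · exact Real.sqrt_le_sqrt (by linarith)
  · intro u v h
    rw [hdist, hMadj u v h]
    norm_num
  · intro u v h1 h2
    rw [hdist, hMnadj u v h1 h2]
    congr 1
    ring

end Helpers

/-- For a non-complete graph `G` on `n ≥ 2` vertices,
`n/2 ≤ dim^J_2(G) ≤ n - 1`; moreover if `dim^J_2(G) = n/2` then `n` is even and `G` is the
cocktail-party graph `K_{2,…,2}` with `n/2` parts. -/
theorem dimJ2_bounds (n : ℕ) (hn : 2 ≤ n) (G : SimpleGraph (Fin n)) (hG : G ≠ ⊤) :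
    (n : ℝ) / 2 ≤ (dimJ2 G : ℝ) ∧ dimJ2 G ≤ n - 1 ∧
    ((dimJ2 G : ℝ) = (n : ℝ) / 2 → Even n ∧
      Nonempty (G ≃g SimpleGraph.completeMultipartiteGraph
        fun _ : Fin (dimJ2 G) => Fin 2)) := by
  obtain ⟨f₀, b₀, hrep₀, hnorm₀⟩ := exists_rep hn G hG
  have hmem : (n - 1) ∈ {d | ∃ (f : Fin n → EuclideanSpace ℝ (Fin d)) (b : ℝ),
      IsTwoDistRep G f (Real.sqrt 2) b ∧ ∀ v, ‖f v‖ = 1} := ⟨f₀, b₀, hrep₀, hnorm₀⟩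
  have hub : dimJ2 G ≤ n - 1 := Nat.sInf_le hmem
  have hmem' : dimJ2 G ∈ {d | ∃ (f : Fin n → EuclideanSpace ℝ (Fin d)) (b : ℝ),
      IsTwoDistRep G f (Real.sqrt 2) b ∧ ∀ v, ‖f v‖ = 1} := Nat.sInf_mem ⟨n - 1, hmem⟩
  obtain ⟨f, b, hrep, hnorm⟩ := hmem'
  obtain ⟨hlow, hstruct⟩ := rep_structure hn G hrep hnorm
  refine ⟨?_, hub, ?_⟩
  · have h1 : (n : ℝ) ≤ 2 * (dimJ2 G : ℝ) := by exact_mod_cast hlow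
    linarith
  · intro heq
    have h2 : n = 2 * dimJ2 G := by
      have h3 : (n : ℝ) = 2 * (dimJ2 G : ℝ) := by rw [heq]; ring
      exact_mod_cast h3
    obtain ⟨p, hpp, hpne, hadj⟩ := hstruct h2
    exact ⟨⟨dimJ2 G, by omega⟩, cocktail h2 G p hpp hpne hadj⟩
end
end

section
/- Let S be a finite set of points on the unit sphere of ℝ^d centered at the origin with |S| ≥ d + 1, such that any two distinct points of S are at distance at least √2. If the origin lies on the boundary of the convex hull of S (the origin belongs to the convex hull but not to its interior), then S is join-decomposable: there exist nonempty disjoint sets S₁ and S₂ with S = S₁ ∪ S₂ and a linear subspace L of ℝ^d with S₁ ⊆ L and S₂ ⊆ L^⊥ (the orthogonal complement of L). -/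
open scoped Classical RealInnerProductSpace

noncomputable section

set_option maxHeartbeats 1000000 in
lemma aux_split {d : ℕ} (S : Finset (EuclideanSpace ℝ (Fin d)))
    (hinner : ∀ p ∈ S, ∀ q ∈ S, p ≠ q → ⟪p, q⟫ ≤ 0)
    (μ : EuclideanSpace ℝ (Fin d) → ℝ)
    (hμ0 : ∀ p ∈ S, 0 ≤ μ p)
    (hsum : ∑ p ∈ S, μ p • p = 0)
    (hne : (S.filter (fun p => 0 < μ p)).Nonempty)
    (hproper : S.filter (fun p => 0 < μ p) ≠ S) :
    ∃ S₁ S₂ : Finset (EuclideanSpace ℝ (Fin d)),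
      S₁.Nonempty ∧ S₂.Nonempty ∧ Disjoint S₁ S₂ ∧ S = S₁ ∪ S₂ ∧
      ∃ L : Submodule ℝ (EuclideanSpace ℝ (Fin d)),
        (↑S₁ : Set (EuclideanSpace ℝ (Fin d))) ⊆ (L : Set (EuclideanSpace ℝ (Fin d))) ∧
        (↑S₂ : Set (EuclideanSpace ℝ (Fin d))) ⊆ (Lᗮ : Set (EuclideanSpace ℝ (Fin d))) := by
  classical
  set S₁ := S.filter (fun p => 0 < μ p) with hS₁
  have hsub : S₁ ⊆ S := Finset.filter_subset _ _
  have horth : ∀ q ∈ S \ S₁, ∀ p ∈ S₁, ⟪p, q⟫ = 0 := by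
    intro q hq
    obtain ⟨hqS, hqn⟩ := Finset.mem_sdiff.mp hq
    have hμq : μ q = 0 := by
      by_contra h
      exact hqn (Finset.mem_filter.mpr ⟨hqS, lt_of_le_of_ne (hμ0 q hqS) (Ne.symm h)⟩)
    have h1 : ∑ p ∈ S, μ p * ⟪p, q⟫ = 0 := by
      have h := congrArg (fun x => (inner ℝ x q : ℝ)) hsum
      simp only [sum_inner, real_inner_smul_left, inner_zero_left] at h
      exact h
    have h2 : ∀ p ∈ S, μ p * ⟪p, q⟫ ≤ 0 := by
      intro p hp
      rcases eq_or_ne p q with rfl | hpq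
      · simp [hμq]
      · exact mul_nonpos_iff.mpr (Or.inl ⟨hμ0 p hp, hinner p hp q hqS hpq⟩)
    have h3 := (Finset.sum_eq_zero_iff_of_nonpos h2).mp h1
    intro p hp
    obtain ⟨hpS, hppos⟩ := Finset.mem_filter.mp hp
    rcases mul_eq_zero.mp (h3 p hpS) with h | h
    · exact absurd h hppos.ne'
    · exact h
  have hS2ne : (S \ S₁).Nonempty := by
    rw [Finset.sdiff_nonempty]
    intro h
    exact hproper (le_antisymm hsub h)
  have hO : Submodule.span ℝ (↑(S \ S₁) : Set (EuclideanSpace ℝ (Fin d))) ⟂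
      Submodule.span ℝ (↑S₁ : Set (EuclideanSpace ℝ (Fin d))) := by
    rw [Submodule.isOrtho_span]
    intro u hu v hv
    rw [real_inner_comm]
    exact horth u hu v hv
  exact ⟨S₁, S \ S₁, hne, hS2ne, Finset.disjoint_sdiff, (Finset.union_sdiff_of_subset hsub).symm,
    Submodule.span ℝ (↑S₁ : Set (EuclideanSpace ℝ (Fin d))), Submodule.subset_span,
    fun q hq => hO (Submodule.subset_span hq)⟩


set_option maxHeartbeats 2000000 in
/-- If `S` lies on the unit sphere of `ℝ^d`, has at least `d + 1` points
with pairwise distances at least `√2`, and the origin lies on the boundary of the convex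
hull of `S`, then `S` is join-decomposable. -/
theorem join_decomposable_of_boundary (d : ℕ) (S : Finset (EuclideanSpace ℝ (Fin d)))
    (hsph : ∀ p ∈ S, ‖p‖ = 1) (hcard : d + 1 ≤ S.card)
    (hdist : ∀ p ∈ S, ∀ q ∈ S, p ≠ q → Real.sqrt 2 ≤ dist p q)
    (h0 : (0 : EuclideanSpace ℝ (Fin d)) ∈
      convexHull ℝ (↑S : Set (EuclideanSpace ℝ (Fin d))))
    (h0' : (0 : EuclideanSpace ℝ (Fin d)) ∉
      interior (convexHull ℝ (↑S : Set (EuclideanSpace ℝ (Fin d))))) :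
    ∃ S₁ S₂ : Finset (EuclideanSpace ℝ (Fin d)),
      S₁.Nonempty ∧ S₂.Nonempty ∧ Disjoint S₁ S₂ ∧ S = S₁ ∪ S₂ ∧
      ∃ L : Submodule ℝ (EuclideanSpace ℝ (Fin d)),
        (↑S₁ : Set (EuclideanSpace ℝ (Fin d))) ⊆ (L : Set (EuclideanSpace ℝ (Fin d))) ∧
        (↑S₂ : Set (EuclideanSpace ℝ (Fin d))) ⊆ (Lᗮ : Set (EuclideanSpace ℝ (Fin d))) := by
    classical
  have hSne : S.Nonempty := Finset.card_pos.mp (by omega)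
  have hinner : ∀ p ∈ S, ∀ q ∈ S, p ≠ q → ⟪p, q⟫ ≤ 0 := by
    intro p hp q hq hpq
    have h := hdist p hp q hq hpq
    have h2 : (Real.sqrt 2) ^ 2 ≤ dist p q ^ 2 := pow_le_pow_left₀ (Real.sqrt_nonneg 2) h 2
    rw [Real.sq_sqrt (by norm_num : (0:ℝ) ≤ 2), dist_eq_norm, norm_sub_sq_real,
      hsph p hp, hsph q hq] at h2
    linarith
  have h0c := h0
  rw [Finset.convexHull_eq] at h0c
  obtain ⟨w, hw0, hw1, hwc⟩ := h0c
  rw [Finset.centerMass_eq_of_sum_1 _ id hw1] at hwc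
  have hsum : ∑ p ∈ S, w p • p = 0 := hwc
  have hTne : (S.filter (fun p => 0 < w p)).Nonempty := by
    by_contra h
    rw [Finset.not_nonempty_iff_eq_empty, Finset.filter_eq_empty_iff] at h
    have h' : ∑ p ∈ S, w p = 0 :=
      Finset.sum_eq_zero fun p hp => le_antisymm (not_lt.mp (h hp)) (hw0 p hp)
    rw [hw1] at h'; norm_num at h'
  by_cases hTS : S.filter (fun p => 0 < w p) = S
  swap
  · exact aux_split S hinner w hw0 hsum hTne hTS
  have hpos : ∀ p ∈ S, 0 < w p := by
    intro p hp
    rw [← hTS] at hp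
    exact (Finset.mem_filter.mp hp).2
  -- Step 1: the linear span of S is not everything
  have hspan : Submodule.span ℝ (↑S : Set (EuclideanSpace ℝ (Fin d))) ≠ ⊤ := by
    intro htop
    apply h0'
    have h0aff : (0 : EuclideanSpace ℝ (Fin d)) ∈
        affineSpan ℝ (↑S : Set (EuclideanSpace ℝ (Fin d))) :=
      convexHull_subset_affineSpan _ h0
    have haff : affineSpan ℝ (↑S : Set (EuclideanSpace ℝ (Fin d))) = ⊤ := by
      rw [← affineSpan_insert_eq_affineSpan ℝ h0aff]
      apply (AffineSubspace.ext_iff _ _).2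
      rw [affineSpan_insert_zero, htop]
      simp
    obtain ⟨x, hx⟩ : (interior (convexHull ℝ
        (↑S : Set (EuclideanSpace ℝ (Fin d))))).Nonempty :=
      interior_convexHull_nonempty_iff_affineSpan_eq_top.mpr haff
    have hxc : x ∈ convexHull ℝ (↑S : Set (EuclideanSpace ℝ (Fin d))) := interior_subset hx
    rw [Finset.convexHull_eq] at hxc
    obtain ⟨ν, hν0, hν1, hνc⟩ := hxc
    rw [Finset.centerMass_eq_of_sum_1 _ id hν1] at hνc
    have hνsum : ∑ p ∈ S, ν p • p = x := hνc
    set ε : ℝ := min (S.inf' hSne w) 1 / 2 with hε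
    have hwinf : 0 < S.inf' hSne w := by
      rw [Finset.lt_inf'_iff]
      exact fun p hp => hpos p hp
    have hεpos : 0 < ε := by
      rw [hε]
      have := lt_min hwinf one_pos
      linarith
    have hεlt1 : ε < 1 := by
      have : min (S.inf' hSne w) 1 ≤ 1 := min_le_right _ _
      rw [hε]; linarith
    have hεle : ∀ p ∈ S, ε ≤ w p := by
      intro p hp
      have h2 : S.inf' hSne w ≤ w p := Finset.inf'_le _ hp
      have h1 : min (S.inf' hSne w) 1 ≤ S.inf' hSne w := min_le_left _ _
      rw [hε]; linarith
    have hνle1 : ∀ p ∈ S, ν p ≤ 1 := by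
      intro p hp
      rw [← hν1]
      exact Finset.single_le_sum hν0 hp
    have h1ε : (0:ℝ) < 1 - ε := by linarith
    set κ : EuclideanSpace ℝ (Fin d) → ℝ := fun p => (1 - ε)⁻¹ * (w p - ε * ν p) with hκ
    have hκ0 : ∀ p ∈ S, 0 ≤ κ p := by
      intro p hp
      have h3 : ε * ν p ≤ ε := by nlinarith [hν0 p hp, hνle1 p hp]
      have h4 := hεle p hp
      have : 0 ≤ w p - ε * ν p := by linarith
      rw [hκ]
      positivity
    have hκ1 : ∑ p ∈ S, κ p = 1 := by
      rw [hκ]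
      rw [← Finset.mul_sum, Finset.sum_sub_distrib, ← Finset.mul_sum, hw1, hν1]
      field_simp
    have hκsum : ∑ p ∈ S, κ p • p = (-((1 - ε)⁻¹ * ε)) • x := by
      have hcong : ∀ p ∈ S, κ p • p
          = (1 - ε)⁻¹ • (w p • p) - ((1 - ε)⁻¹ * ε) • (ν p • p) := by
        intro p _
        rw [hκ, smul_smul, smul_smul, ← sub_smul]
        ring_nf
      rw [Finset.sum_congr rfl hcong, Finset.sum_sub_distrib, ← Finset.smul_sum,
        ← Finset.smul_sum, hsum, hνsum, smul_zero, zero_sub, neg_smul]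
    set c : ℝ := (1 - ε)⁻¹ * ε with hc
    have hcpos : 0 < c := by rw [hc]; positivity
    have hy : (-c) • x ∈ convexHull ℝ (↑S : Set (EuclideanSpace ℝ (Fin d))) := by
      rw [Finset.convexHull_eq]
      exact ⟨κ, hκ0, hκ1, by rw [Finset.centerMass_eq_of_sum_1 _ id hκ1]; exact hκsum⟩
    have habs : (c / (1 + c)) • x + (1 / (1 + c)) • ((-c) • x) ∈
        interior (convexHull ℝ (↑S : Set (EuclideanSpace ℝ (Fin d)))) := by
      refine (convex_convexHull ℝ _).combo_interior_self_mem_interior hx hy ?_ ?_ ?_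
      · positivity
      · positivity
      · field_simp
        ring
    have hzero : (c / (1 + c)) • x + (1 / (1 + c)) • ((-c) • x)
        = (0 : EuclideanSpace ℝ (Fin d)) := by
      rw [smul_smul, ← add_smul]
      have : c / (1 + c) + 1 / (1 + c) * (-c) = 0 := by
        field_simp
        ring
      rw [this, zero_smul]
    rwa [hzero] at habs
  -- Step 2: find a second linear dependence
  haveI : FiniteDimensional ℝ (EuclideanSpace ℝ (Fin d)) := by infer_instance
  set v : (↥S) → EuclideanSpace ℝ (Fin d) := fun p => (p : EuclideanSpace ℝ (Fin d)) with hv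
  set Φ : ((↥S) → ℝ) →ₗ[ℝ] EuclideanSpace ℝ (Fin d) :=
    Fintype.linearCombination ℝ v with hΦ
  have hΦapp : ∀ f : (↥S) → ℝ, Φ f = ∑ i : ↥S, f i • v i := fun f => rfl
  have hrange : LinearMap.range Φ ≤ Submodule.span ℝ (↑S : Set (EuclideanSpace ℝ (Fin d))) := by
    rintro y ⟨f, rfl⟩
    rw [hΦapp]
    exact Submodule.sum_mem _ fun i _ =>
      Submodule.smul_mem _ _ (Submodule.subset_span i.2)
  have hk2 : 2 ≤ Module.finrank ℝ (LinearMap.ker Φ) := by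
    have h1 := LinearMap.finrank_range_add_finrank_ker Φ
    have hdom : Module.finrank ℝ ((↥S) → ℝ) = S.card := by
      rw [Module.finrank_pi]
      simp
    have h2 : Module.finrank ℝ (LinearMap.range Φ) < d := by
      calc Module.finrank ℝ (LinearMap.range Φ)
          ≤ Module.finrank ℝ (Submodule.span ℝ (↑S : Set (EuclideanSpace ℝ (Fin d)))) :=
            Submodule.finrank_mono hrange
        _ < Module.finrank ℝ (EuclideanSpace ℝ (Fin d)) :=
            Submodule.finrank_lt hspan
        _ = d := finrank_euclideanSpace_fin
    rw [hdom] at h1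
    omega
  set w' : (↥S) → ℝ := fun p => w ↑p with hw'
  have hw'ker : Φ w' = 0 := by
    rw [hΦapp]
    rw [show ∑ i : ↥S, w' i • v i = ∑ p ∈ S, w p • p from Finset.sum_coe_sort S (fun p => w p • p)]
    exact hsum
  have hw'ne : w' ≠ 0 := by
    intro h
    obtain ⟨p, hp⟩ := hSne
    have := congrFun h ⟨p, hp⟩
    simp only [hw', Pi.zero_apply] at this
    exact (hpos p hp).ne' this
  -- there is a kernel element outside the span of w'
  have hbex : ∃ b : (↥S) → ℝ, Φ b = 0 ∧ b ∉ Submodule.span ℝ {w'} := by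
    by_contra h
    push_neg at h
    have hle : LinearMap.ker Φ ≤ Submodule.span ℝ {w'} := fun b hb =>
      h b (LinearMap.mem_ker.mp hb)
    have := Submodule.finrank_mono hle
    rw [finrank_span_singleton hw'ne] at this
    omega
  obtain ⟨b₀, hb₀ker, hb₀span⟩ := hbex
  have hbex2 : ∃ b : (↥S) → ℝ, Φ b = 0 ∧ b ∉ Submodule.span ℝ {w'} ∧ ∃ q, b q < 0 := by
    by_cases hneg : ∃ q, b₀ q < 0
    · exact ⟨b₀, hb₀ker, hb₀span, hneg⟩
    · push_neg at hneg
      have hb₀ne : b₀ ≠ 0 := fun h => hb₀span (h ▸ Submodule.zero_mem _)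
      obtain ⟨q₀, hq₀⟩ := Function.ne_iff.mp hb₀ne
      refine ⟨-b₀, by rw [map_neg, hb₀ker, neg_zero], ?_, q₀, ?_⟩
      · intro h
        exact hb₀span (by simpa using Submodule.neg_mem _ h)
      · simp only [Pi.neg_apply, neg_neg, Pi.zero_apply] at hq₀ ⊢
        have := hneg q₀
        rcases lt_or_eq_of_le this with h | h
        · linarith
        · exact absurd h.symm (by simpa using hq₀)
  obtain ⟨b, hbker, hbspan, hbneg⟩ := hbex2
  set F : Finset (↥S) := Finset.univ.filter (fun p => b p < 0) with hF
  have hFne : F.Nonempty := by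
    obtain ⟨q, hq⟩ := hbneg
    exact ⟨q, Finset.mem_filter.mpr ⟨Finset.mem_univ _, hq⟩⟩
  set t₀ : ℝ := F.inf' hFne (fun p => w' p / (-(b p))) with ht₀
  have ht₀pos : 0 < t₀ := by
    rw [ht₀, Finset.lt_inf'_iff]
    intro p hp
    have hbp : b p < 0 := (Finset.mem_filter.mp hp).2
    exact div_pos (hpos _ p.2) (by linarith)
  set cf : (↥S) → ℝ := fun p => w' p + t₀ * b p with hcf
  have hcf0 : ∀ p : ↥S, 0 ≤ cf p := by
    intro p
    show (0:ℝ) ≤ w' p + t₀ * b p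
    have hw'p : 0 < w' p := hpos _ p.2
    by_cases hbp : b p < 0
    · have hpF : p ∈ F := by
        rw [hF]
        exact Finset.mem_filter.mpr ⟨Finset.mem_univ _, hbp⟩
      have hle : t₀ ≤ w' p / (-(b p)) := Finset.inf'_le _ hpF
      rw [le_div_iff₀ (by linarith : (0:ℝ) < -(b p))] at hle
      nlinarith
    · push_neg at hbp
      have h2 : 0 ≤ t₀ * b p := mul_nonneg ht₀pos.le hbp
      linarith
  obtain ⟨q, hqF, hqeq⟩ := Finset.exists_mem_eq_inf' hFne (fun p => w' p / (-(b p)))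
  have hbq : b q < 0 := by
    have := hqF
    rw [hF] at this
    exact (Finset.mem_filter.mp this).2
  have hcfq : cf q = 0 := by
    show w' q + t₀ * b q = 0
    rw [show t₀ = w' q / (-(b q)) from hqeq]
    have hbqne : b q ≠ 0 := ne_of_lt hbq
    have h : w' q / (-(b q)) * b q = -(w' q) := by
      rw [div_mul_eq_mul_div, div_neg, mul_div_assoc, div_self hbqne, mul_one]
    linarith [h]
  -- define weights on the ambient space
  set μ : EuclideanSpace ℝ (Fin d) → ℝ :=
    fun x => if hx : x ∈ S then cf ⟨x, hx⟩ else 0 with hμ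
  have hμval : ∀ i : ↥S, μ ↑i = cf i := by
    intro i
    rw [hμ]
    simp only [i.2, dif_pos]
  have hμ0 : ∀ p ∈ S, 0 ≤ μ p := by
    intro p hp
    rw [show μ p = cf ⟨p, hp⟩ from hμval ⟨p, hp⟩]
    exact hcf0 _
  have hμsum : ∑ p ∈ S, μ p • p = 0 := by
    rw [← Finset.sum_coe_sort S (fun p => μ p • p)]
    have hcong : ∀ i : ↥S, μ (↑i) • (i : EuclideanSpace ℝ (Fin d)) = cf i • v i := by
      intro i
      rw [hμval]
    rw [Finset.sum_congr rfl (fun i _ => hcong i)]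
    have : ∑ i : ↥S, cf i • v i = Φ cf := rfl
    rw [this]
    have hcfeq : cf = w' + t₀ • b := by
      funext i
      simp [hcf]
    rw [hcfeq, map_add, map_smul, hw'ker, hbker, smul_zero, add_zero]
  have hμne : (S.filter (fun p => 0 < μ p)).Nonempty := by
    by_contra h
    rw [Finset.not_nonempty_iff_eq_empty, Finset.filter_eq_empty_iff] at h
    have hall : ∀ i : ↥S, cf i = 0 := by
      intro i
      have h1 := h i.2
      have h2 := hμ0 _ i.2
      have : μ ↑i = 0 := le_antisymm (not_lt.mp h1) h2
      rwa [hμval] at this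
    apply hbspan
    rw [Submodule.mem_span_singleton]
    refine ⟨-t₀⁻¹, ?_⟩
    funext i
    have hci : w' i + t₀ * b i = 0 := hall i
    simp only [Pi.smul_apply, smul_eq_mul]
    have ht₀ne : t₀ ≠ 0 := ht₀pos.ne'
    apply mul_left_cancel₀ ht₀ne
    have h1 : t₀ * (-t₀⁻¹ * w' i) = -(w' i) := by
      field_simp
    rw [h1]
    linarith [hci]
  have hμproper : S.filter (fun p => 0 < μ p) ≠ S := by
    intro h
    have hqS : (q : EuclideanSpace ℝ (Fin d)) ∈ S := q.2
    have : (q : EuclideanSpace ℝ (Fin d)) ∈ S.filter (fun p => 0 < μ p) := by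
      rw [h]; exact hqS
    have hlt := (Finset.mem_filter.mp this).2
    rw [show μ ↑q = cf q from hμval q, hcfq] at hlt
    exact lt_irrefl _ hlt
  exact aux_split S hinner μ hμ0 hμsum hμne hμproper
end
end
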